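/- Let p be a prime, H a subgroup of 𝔽_p^×, and k ≥ 1 an integer. Define f(a) = (1/|H|)·∑_{s∈H} e(as/p) and ρ_k(x) = |H|^{−2k}·#{(s₁,…,s_{2k}) ∈ H^{2k} : s₁ − s₂ + ⋯ + s_{2k−1} − s_{2k} = x} for x ∈ 𝔽_p. Then for every a ∈ 𝔽_p one has ∑_{x∈𝔽_p} ρ_k(x)·|f(ax)|^{4k} ≥ |f(a)|^{8k²}. -/

import Mathlib

/-- `eChar p x` is `e(x/p) = exp(2πi x̃/p)` where `x̃` is the integer representative of `x`. -/
noncomputable def eChar (p : ℕ) (x : ZMod p) : ℂ :=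
  Complex.exp (2 * Real.pi * Complex.I * (x.val : ℂ) / p)

lemma eChar_eq {p : ℕ} [NeZero p] (x : ZMod p) : eChar p x = ZMod.stdAddChar x := by
  rw [ZMod.stdAddChar_apply, ZMod.toCircle_apply, eChar]

lemma eChar_neg {p : ℕ} [NeZero p] (x : ZMod p) :
    eChar p (-x) = (starRingEnd ℂ) (eChar p x) := by
  rw [eChar_eq, eChar_eq, ZMod.stdAddChar_apply, ZMod.stdAddChar_apply,
    AddChar.map_neg_eq_inv, ← Circle.coe_inv_eq_conj, Circle.coe_inv]

lemma addChar_map_sum {ι A M : Type*} [AddCommMonoid A] [CommMonoid M] (ψ : AddChar A M)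
    (s : Finset ι) (f : ι → A) : ψ (∑ i ∈ s, f i) = ∏ i ∈ s, ψ (f i) := by
  induction s using Finset.cons_induction with
  | empty => rw [Finset.sum_empty, Finset.prod_empty, AddChar.map_zero_eq_one]
  | cons a s h ih => rw [Finset.sum_cons, Finset.prod_cons, AddChar.map_add_eq_mul, ih]

lemma fiber_sum {α β M : Type*} [Fintype α] [Fintype β] [DecidableEq β] [NonAssocSemiring M]
    (A : α → β) (g : β → M) :
    ∑ x, (Nat.card {s : α // A s = x} : M) * g x = ∑ s, g (A s) := by
  classical
  rw [← Finset.sum_fiberwise_of_maps_to (g := A) (fun s _ => Finset.mem_univ (A s))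
    fun s => g (A s)]
  refine Finset.sum_congr rfl fun x _ => ?_
  calc (Nat.card {s : α // A s = x} : M) * g x
      = ∑ _s ∈ Finset.univ.filter (fun s => A s = x), g x := by
        rw [Finset.sum_const, Nat.card_eq_fintype_card, Fintype.card_subtype, nsmul_eq_mul]
    _ = ∑ s ∈ Finset.univ.filter (fun s => A s = x), g (A s) := by
        refine Finset.sum_congr rfl fun s hs => ?_
        rw [(Finset.mem_filter.mp hs).2]

lemma prod_alt {M : Type*} [Monoid M] [HasDistribNeg M] (F : M → ℂ) (k : ℕ) :
    ∏ i ∈ Finset.range (2 * k), F ((-1 : M) ^ i) = (F 1 * F (-1)) ^ k := by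
  induction k with
  | zero => simp
  | succ k ih =>
    rw [show 2 * (k + 1) = 2 * k + 1 + 1 by ring, Finset.prod_range_succ,
      Finset.prod_range_succ, ih, Even.neg_one_pow ⟨k, by ring⟩, pow_succ,
      pow_succ, Even.neg_one_pow ⟨k, by ring⟩, one_mul]
    ring

open scoped Classical in
/-- For `H` a subgroup of `𝔽_p^×`, `f(a) = (1/|H|)∑_{s∈H} e(as/p)`, and `ρ_k` the density
of the alternating random walk `S₁ - S₂ + ⋯ + S_{2k-1} - S_{2k}` with steps uniform on
`H`, one has `∑_x ρ_k(x)·|f(ax)|^{4k} ≥ |f(a)|^{8k²}` for every `a ∈ 𝔽_p`. -/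
theorem random_walk_expansion_inequality (p : ℕ) [Fact p.Prime]
    (H : Subgroup (ZMod p)ˣ) (k : ℕ) (hk : 1 ≤ k)
    (f : ZMod p → ℂ)
    (hf : ∀ a : ZMod p, f a = (1 / (Nat.card H : ℂ)) *
        ∑ s : H, eChar p (a * ((s : (ZMod p)ˣ) : ZMod p)))
    (ρk : ZMod p → ℝ)
    (hρk : ∀ x : ZMod p, ρk x =
      (Nat.card {s : Fin (2 * k) → H //
          ∑ i : Fin (2 * k), (-1 : ZMod p) ^ (i : ℕ) * ((s i : (ZMod p)ˣ) : ZMod p) = x} : ℝ) /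
        (Nat.card H : ℝ) ^ (2 * k)) :
    ∀ a : ZMod p,
      ‖f a‖ ^ (8 * k ^ 2) ≤ ∑ x, ρk x * ‖f (a * x)‖ ^ (4 * k) := by
  classical
  intro a
  set n : ℕ := Nat.card H with hn
  have hnpos : 0 < n := Nat.card_pos
  have hn0 : (n : ℂ) ≠ 0 := Nat.cast_ne_zero.mpr hnpos.ne'
  set A : (Fin (2 * k) → H) → ZMod p :=
    fun s => ∑ i : Fin (2 * k), (-1 : ZMod p) ^ (i : ℕ) * ((s i : (ZMod p)ˣ) : ZMod p) with hA
  -- invariance under multiplication by an element of H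
  have hinv : ∀ u : H, ∑ s : Fin (2 * k) → H,
      eChar p (((u : (ZMod p)ˣ) : ZMod p) * (a * A s)) = ∑ s, eChar p (a * A s) := by
    intro u
    refine Fintype.sum_equiv (Equiv.piCongrRight fun _ => Equiv.mulLeft u) _ _ fun s => ?_
    have hAe : A ((Equiv.piCongrRight fun _ => Equiv.mulLeft u) s)
        = ((u : (ZMod p)ˣ) : ZMod p) * A s := by
      rw [hA]
      simp only [Equiv.piCongrRight_apply, Pi.map_apply, Equiv.coe_mulLeft, Finset.mul_sum]
      refine Finset.sum_congr rfl fun i _ => ?_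
      push_cast
      ring
    rw [hAe]
    ring_nf
  -- the single character sum F
  set F : ZMod p → ℂ := fun ε => ∑ t : H, eChar p (a * (ε * ((t : (ZMod p)ˣ) : ZMod p))) with hF
  have hF1 : F 1 = (n : ℂ) * f a := by
    rw [hF, hf a]
    simp only [one_mul]
    field_simp
  have hFneg : F (-1) = (starRingEnd ℂ) (F 1) := by
    rw [hF, map_sum]
    refine Finset.sum_congr rfl fun t _ => ?_
    rw [← eChar_neg]
    ring_nf
  -- the main character sum computation
  have hS : ∑ s : Fin (2 * k) → H, eChar p (a * A s)
      = (((n : ℝ) ^ 2 * ‖f a‖ ^ 2 : ℝ) : ℂ) ^ k := by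
    have step1 : ∀ s : Fin (2 * k) → H, eChar p (a * A s)
        = ∏ i : Fin (2 * k), eChar p (a * ((-1 : ZMod p) ^ (i : ℕ) * ((s i : (ZMod p)ˣ) : ZMod p))) := by
      intro s
      simp only [eChar_eq]
      rw [hA, Finset.mul_sum, addChar_map_sum]
    calc ∑ s : Fin (2 * k) → H, eChar p (a * A s)
        = ∑ s : Fin (2 * k) → H, ∏ i : Fin (2 * k),
            eChar p (a * ((-1 : ZMod p) ^ (i : ℕ) * ((s i : (ZMod p)ˣ) : ZMod p))) :=
          Finset.sum_congr rfl fun s _ => step1 s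
      _ = ∏ i : Fin (2 * k), F ((-1 : ZMod p) ^ (i : ℕ)) := by
          simp only [hF]
          rw [Finset.prod_univ_sum (fun _ : Fin (2 * k) => (Finset.univ : Finset H))
            (fun i t => eChar p (a * ((-1 : ZMod p) ^ (i : ℕ) * ((t : (ZMod p)ˣ) : ZMod p)))),
            Fintype.piFinset_univ]
      _ = ∏ i ∈ Finset.range (2 * k), F ((-1 : ZMod p) ^ i) := by
          rw [Fin.prod_univ_eq_prod_range (fun i => F ((-1 : ZMod p) ^ i)) (2 * k)]
      _ = (F 1 * F (-1)) ^ k := prod_alt F k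
      _ = (((n : ℝ) ^ 2 * ‖f a‖ ^ 2 : ℝ) : ℂ) ^ k := by
          rw [hFneg, Complex.mul_conj, hF1, Complex.normSq_mul, Complex.normSq_natCast,
            Complex.normSq_eq_norm_sq]
          push_cast
          ring
  -- key identity: the complex weighted sum equals |f a|^{2k}
  have key : ∑ x : ZMod p, (ρk x : ℂ) * f (a * x) = ((‖f a‖ : ℝ) : ℂ) ^ (2 * k) := by
    have : ∀ x : ZMod p, (ρk x : ℂ) * f (a * x)
        = (1 / (n : ℂ) ^ (2 * k)) * ((Nat.card {s : Fin (2 * k) → H // A s = x} : ℂ) * f (a * x)) := by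
      intro x
      rw [hρk x]
      push_cast
      ring
    rw [Finset.sum_congr rfl fun x _ => this x, ← Finset.mul_sum, fiber_sum A (fun x => f (a * x))]
    have hfa : ∀ s : Fin (2 * k) → H, f (a * A s)
        = (1 / (n : ℂ)) * ∑ u : H, eChar p (((u : (ZMod p)ˣ) : ZMod p) * (a * A s)) := by
      intro s
      rw [hf (a * A s)]
      congr 1
      refine Finset.sum_congr rfl fun u _ => ?_
      ring_nf
    rw [Finset.sum_congr rfl fun s _ => hfa s, ← Finset.mul_sum, Finset.sum_comm]
    rw [Finset.sum_congr rfl fun u _ => hinv u, Finset.sum_const, Finset.card_univ]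
    rw [← Nat.card_eq_fintype_card, ← hn, nsmul_eq_mul, hS]
    have h2 : (((n : ℝ) ^ 2 * ‖f a‖ ^ 2 : ℝ) : ℂ) ^ k
        = (n : ℂ) ^ (2 * k) * ((‖f a‖ : ℝ) : ℂ) ^ (2 * k) := by
      push_cast
      rw [pow_mul, pow_mul]
      ring
    rw [h2]
    field_simp
  -- basic facts about ρk
  have hρ0 : ∀ x : ZMod p, 0 ≤ ρk x := by
    intro x
    rw [hρk x]
    positivity
  have hρsum : ∑ x : ZMod p, ρk x = 1 := by
    have : ∀ x : ZMod p, ρk x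
        = (1 / (n : ℝ) ^ (2 * k)) * ((Nat.card {s : Fin (2 * k) → H // A s = x} : ℝ) * 1) := by
      intro x
      rw [hρk x]
      ring
    rw [Finset.sum_congr rfl fun x _ => this x, ← Finset.mul_sum,
      fiber_sum A (fun _ => (1 : ℝ))]
    rw [Finset.sum_const, Finset.card_univ, nsmul_eq_mul, mul_one]
    have hcard : Fintype.card (Fin (2 * k) → H) = n ^ (2 * k) := by
      rw [Fintype.card_fun, Fintype.card_fin, ← Nat.card_eq_fintype_card, ← hn]
    rw [hcard]
    have : ((n : ℝ)) ≠ 0 := Nat.cast_ne_zero.mpr hnpos.ne'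
    push_cast
    field_simp
  -- triangle inequality
  have htri : ‖∑ x : ZMod p, (ρk x : ℂ) * f (a * x)‖
      ≤ ∑ x : ZMod p, ρk x * ‖f (a * x)‖ := by
    refine le_trans (norm_sum_le _ _) (le_of_eq ?_)
    refine Finset.sum_congr rfl fun x _ => ?_
    rw [norm_mul, Complex.norm_of_nonneg (hρ0 x)]
  have habs : ‖∑ x : ZMod p, (ρk x : ℂ) * f (a * x)‖
      = ‖f a‖ ^ (2 * k) := by
    rw [key, norm_pow, Complex.norm_of_nonneg (norm_nonneg _)]
  -- Jensen
  have hjensen : (∑ x : ZMod p, ρk x * ‖f (a * x)‖) ^ (4 * k)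
      ≤ ∑ x : ZMod p, ρk x * ‖f (a * x)‖ ^ (4 * k) :=
    Real.pow_arith_mean_le_arith_mean_pow Finset.univ ρk (fun x => ‖f (a * x)‖)
      (fun x _ => hρ0 x) hρsum (fun x _ => norm_nonneg _) (4 * k)
  calc ‖f a‖ ^ (8 * k ^ 2)
      = (‖f a‖ ^ (2 * k)) ^ (4 * k) := by rw [← pow_mul]; ring_nf
    _ = ‖∑ x : ZMod p, (ρk x : ℂ) * f (a * x)‖ ^ (4 * k) := by rw [habs]
    _ ≤ (∑ x : ZMod p, ρk x * ‖f (a * x)‖) ^ (4 * k) :=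
        pow_le_pow_left₀ (norm_nonneg _) htri (4 * k)
    _ ≤ ∑ x : ZMod p, ρk x * ‖f (a * x)‖ ^ (4 * k) := hjensen
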